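/- Let g : [0, ∞) → ℝ be L-Lipschitz with g(0) = 0, extended to a spectral function on M×N matrices by g(X) = O g(D) U^T where X = O D U^T is a singular value decomposition and g is applied entrywise to the diagonal singular values. Then for all X, Y ∈ ℝ^{M×N}: ‖g(X) - g(Y)‖_F ≤ L ‖X - Y‖_F. -/
import Mathlib

/-- A rectangular `M × N` matrix is "diagonal with nonnegative entries" if all
off-diagonal entries (entries with differing index values) vanish and the
diagonal entries are nonnegative. -/
def IsRectDiagNonneg {M N : ℕ} (D : Matrix (Fin M) (Fin N) ℝ) : Prop :=
  (∀ i j, i.val ≠ j.val → D i j = 0) ∧ ∀ i j, 0 ≤ D i j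

/-- Entrywise application of `g : ℝ → ℝ` to the diagonal of a rectangular
diagonal matrix. -/
def rectDiagMap {M N : ℕ} (g : ℝ → ℝ) (D : Matrix (Fin M) (Fin N) ℝ) :
    Matrix (Fin M) (Fin N) ℝ :=
  fun i j => if i.val = j.val then g (D i j) else 0

lemma aux_scalar_ineq (L a b x x' y y' : ℝ)
    (hd : (y - y')^2 ≤ L^2*(x - x')^2) (hs : (y + y')^2 ≤ L^2*(x + x')^2) :
    2*(a*b)*(L^2*(x*x') - y*y') ≤ (a^2+b^2)/2 * ((L^2*x^2 - y^2) + (L^2*x'^2 - y'^2)) := by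
  nlinarith [mul_nonneg (sq_nonneg (a+b)) (by linarith : (0:ℝ) ≤ L^2*(x-x')^2 - (y-y')^2),
    mul_nonneg (sq_nonneg (a-b)) (by linarith : (0:ℝ) ≤ L^2*(x+x')^2 - (y+y')^2)]

lemma aux_partial_sq_le {M K : ℕ} (v : Fin M → ℝ) (hv : ∑ j, (v j)^2 = 1)
    (e : Fin K → Fin M) (he : Function.Injective e) : ∑ t, (v (e t))^2 ≤ 1 := by
  have h1 : ∑ t : Fin K, (v (e t))^2 = ∑ j ∈ Finset.univ.image e, (v j)^2 :=
    (Finset.sum_image (f := fun j => (v j)^2) (g := e) (fun x _ y _ h => he h)).symm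
  rw [h1, ← hv]
  exact Finset.sum_le_sum_of_subset_of_nonneg (Finset.subset_univ _)
    (fun i _ _ => sq_nonneg _)

lemma aux_diag_collapse {M N : ℕ} (f : Fin M → Fin N → ℝ)
    (hf : ∀ (a : Fin M) (b : Fin N), a.val ≠ b.val → f a b = 0) :
    ∑ a, ∑ b, f a b
      = ∑ t : Fin (min M N),
          f (Fin.castLE (min_le_left M N) t) (Fin.castLE (min_le_right M N) t) := by
  have hinner : ∀ a : Fin M, ∑ b, f a b = if h : (a : ℕ) < N then f a ⟨a, h⟩ else 0 := by
    intro a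
    by_cases h : (a : ℕ) < N
    · rw [dif_pos h]
      exact Finset.sum_eq_single ⟨a, h⟩
        (fun b _ hb => hf a b (fun hv => hb (Fin.ext hv.symm)))
        (fun h => absurd (Finset.mem_univ _) h)
    · rw [dif_neg h]
      exact Finset.sum_eq_zero fun b _ => hf a b (by omega)
  simp only [hinner]
  have he : Function.Injective (Fin.castLE (min_le_left M N)) := Fin.castLE_injective _
  have h2 : (∑ x : Fin M, if h : (x : ℕ) < N then f x ⟨x, h⟩ else 0)
      = ∑ x ∈ Finset.univ.image (Fin.castLE (min_le_left M N)),
          (if h : (x : ℕ) < N then f x ⟨x, h⟩ else 0) := by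
    refine (Finset.sum_subset (Finset.subset_univ _) ?_).symm
    intro a _ ha
    rw [dif_neg]
    intro h
    exact ha (Finset.mem_image.mpr ⟨⟨a, by omega⟩, Finset.mem_univ _, Fin.ext rfl⟩)
  rw [h2, Finset.sum_image (fun x _ y _ h => he h)]
  apply Finset.sum_congr rfl
  intro t _
  have ht : ((Fin.castLE (min_le_left M N) t : Fin M) : ℕ) < N := by
    have := t.isLt; simp; omega
  rw [dif_pos ht]
  exact congrArg _ (Fin.ext rfl)

lemma aux_core_ineq {m : ℕ} (L : ℝ) (x x' y y' : Fin m → ℝ) (a b : Fin m → Fin m → ℝ)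
    (hy : ∀ s, (y s)^2 ≤ L^2 * (x s)^2) (hy' : ∀ t, (y' t)^2 ≤ L^2 * (x' t)^2)
    (hd : ∀ s t, (y s - y' t)^2 ≤ L^2*(x s - x' t)^2)
    (hsum : ∀ s t, (y s + y' t)^2 ≤ L^2*(x s + x' t)^2)
    (hra : ∀ s, ∑ t, (a s t)^2 ≤ 1) (hrb : ∀ s, ∑ t, (b s t)^2 ≤ 1)
    (hca : ∀ t, ∑ s, (a s t)^2 ≤ 1) (hcb : ∀ t, ∑ s, (b s t)^2 ≤ 1) :
    (∑ s, (y s)^2) + (∑ t, (y' t)^2) - 2 * ∑ s, ∑ t, y s * (a s t * b s t) * y' t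
      ≤ L^2 * ((∑ s, (x s)^2) + (∑ t, (x' t)^2)
          - 2 * ∑ s, ∑ t, x s * (a s t * b s t) * x' t) := by
  have ey : ∀ s, 0 ≤ L^2*(x s)^2 - (y s)^2 := fun s => by linarith [hy s]
  have ey' : ∀ t, 0 ≤ L^2*(x' t)^2 - (y' t)^2 := fun t => by linarith [hy' t]
  have key : ∑ s, ∑ t, 2*(a s t * b s t)*(L^2*(x s * x' t) - y s * y' t)
      ≤ (∑ s, (L^2*(x s)^2 - (y s)^2)) + (∑ t, (L^2*(x' t)^2 - (y' t)^2)) := by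
    have step1 : ∑ s, ∑ t, 2*(a s t * b s t)*(L^2*(x s * x' t) - y s * y' t)
        ≤ ∑ s, ∑ t, (((a s t)^2+(b s t)^2)/2 * (L^2*(x s)^2 - (y s)^2)
            + ((a s t)^2+(b s t)^2)/2 * (L^2*(x' t)^2 - (y' t)^2)) := by
      refine Finset.sum_le_sum fun s _ => Finset.sum_le_sum fun t _ => ?_
      have := aux_scalar_ineq L (a s t) (b s t) (x s) (x' t) (y s) (y' t) (hd s t) (hsum s t)
      linarith [this]
    refine step1.trans ?_
    have split : (∑ s, ∑ t, (((a s t)^2+(b s t)^2)/2 * (L^2*(x s)^2 - (y s)^2)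
            + ((a s t)^2+(b s t)^2)/2 * (L^2*(x' t)^2 - (y' t)^2)))
        = (∑ s, (∑ t, ((a s t)^2+(b s t)^2)/2) * (L^2*(x s)^2 - (y s)^2))
          + (∑ t, (∑ s, ((a s t)^2+(b s t)^2)/2) * (L^2*(x' t)^2 - (y' t)^2)) := by
      have e1 : (∑ s, ∑ t, (((a s t)^2+(b s t)^2)/2 * (L^2*(x s)^2 - (y s)^2)
            + ((a s t)^2+(b s t)^2)/2 * (L^2*(x' t)^2 - (y' t)^2)))
          = (∑ s, ∑ t, ((a s t)^2+(b s t)^2)/2 * (L^2*(x s)^2 - (y s)^2))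
            + (∑ s, ∑ t, ((a s t)^2+(b s t)^2)/2 * (L^2*(x' t)^2 - (y' t)^2)) := by
        rw [← Finset.sum_add_distrib]
        exact Finset.sum_congr rfl fun s _ => Finset.sum_add_distrib
      rw [e1]
      congr 1
      · exact Finset.sum_congr rfl fun s _ => (Finset.sum_mul _ _ _).symm
      · rw [Finset.sum_comm]
        exact Finset.sum_congr rfl fun t _ => (Finset.sum_mul _ _ _).symm
    rw [split]
    have hwrow : ∀ s, (∑ t, ((a s t)^2+(b s t)^2)/2) ≤ 1 := by
      intro s
      have e : ∑ t, ((a s t)^2+(b s t)^2)/2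
          = ((∑ t, (a s t)^2) + ∑ t, (b s t)^2)/2 := by
        rw [← Finset.sum_div, Finset.sum_add_distrib]
      rw [e]; linarith [hra s, hrb s]
    have hwcol : ∀ t, (∑ s, ((a s t)^2+(b s t)^2)/2) ≤ 1 := by
      intro t
      have e : ∑ s, ((a s t)^2+(b s t)^2)/2
          = ((∑ s, (a s t)^2) + ∑ s, (b s t)^2)/2 := by
        rw [← Finset.sum_div, Finset.sum_add_distrib]
      rw [e]; linarith [hca t, hcb t]
    exact add_le_add
      (Finset.sum_le_sum fun s _ => mul_le_of_le_one_left (ey s) (hwrow s))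
      (Finset.sum_le_sum fun t _ => mul_le_of_le_one_left (ey' t) (hwcol t))
  have expand : ∑ s, ∑ t, 2*(a s t * b s t)*(L^2*(x s * x' t) - y s * y' t)
      = 2*L^2*(∑ s, ∑ t, x s * (a s t * b s t) * x' t)
        - 2*(∑ s, ∑ t, y s * (a s t * b s t) * y' t) := by
    rw [Finset.mul_sum, Finset.mul_sum, ← Finset.sum_sub_distrib]
    refine Finset.sum_congr rfl fun s _ => ?_
    rw [Finset.mul_sum, Finset.mul_sum, ← Finset.sum_sub_distrib]
    refine Finset.sum_congr rfl fun t _ => ?_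
    ring
  rw [expand] at key
  have e1 : ∑ s, (L^2*(x s)^2 - (y s)^2) = L^2 * (∑ s, (x s)^2) - ∑ s, (y s)^2 := by
    rw [Finset.mul_sum, ← Finset.sum_sub_distrib]
  have e2 : ∑ t, (L^2*(x' t)^2 - (y' t)^2) = L^2 * (∑ t, (x' t)^2) - ∑ t, (y' t)^2 := by
    rw [Finset.mul_sum, ← Finset.sum_sub_distrib]
  rw [e1, e2] at key
  linarith

open Matrix in
lemma aux_sum_mul_entries {M N : ℕ} (P Q : Matrix (Fin M) (Fin N) ℝ) :
    ∑ a, ∑ b, P a b * Q a b = (Pᵀ * Q).trace := by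
  simp only [Matrix.trace, Matrix.diag, Matrix.mul_apply, Matrix.transpose_apply]
  exact Finset.sum_comm

open Matrix in
lemma aux_frob_expand {M N : ℕ} (O O' : Matrix (Fin M) (Fin M) ℝ)
    (U U' : Matrix (Fin N) (Fin N) ℝ) (Z Z' : Matrix (Fin M) (Fin N) ℝ)
    (hO : Oᵀ * O = 1) (hO' : O'ᵀ * O' = 1) (hU : Uᵀ * U = 1) (hU' : U'ᵀ * U' = 1) :
    ∑ i, ∑ j, ((O * Z * Uᵀ - O' * Z' * U'ᵀ) i j)^2
      = (∑ a, ∑ b, (Z a b)^2) + (∑ a, ∑ b, (Z' a b)^2)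
        - 2 * ∑ a, ∑ b, Z a b * ((Oᵀ * O') * Z' * (Uᵀ * U')ᵀ) a b := by
  have hO2 : O * Oᵀ = 1 := mul_eq_one_comm.mp hO
  have hO'2 : O' * O'ᵀ = 1 := mul_eq_one_comm.mp hO'
  have hU2 : U * Uᵀ = 1 := mul_eq_one_comm.mp hU
  have hU'2 : U' * U'ᵀ = 1 := mul_eq_one_comm.mp hU'
  set X := O * Z * Uᵀ with hX
  set Y := O' * Z' * U'ᵀ with hY
  have h0 : ∑ i, ∑ j, ((X - Y) i j)^2 = ((X - Y)ᵀ * (X - Y)).trace := by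
    rw [← aux_sum_mul_entries]
    exact Finset.sum_congr rfl fun i _ => Finset.sum_congr rfl fun j _ => sq ((X - Y) i j)
  have hsplit : ((X - Y)ᵀ * (X - Y)).trace
      = (Xᵀ * X).trace - (Xᵀ * Y).trace - (Yᵀ * X).trace + (Yᵀ * Y).trace := by
    rw [Matrix.transpose_sub, Matrix.sub_mul, Matrix.mul_sub, Matrix.mul_sub,
      Matrix.trace_sub, Matrix.trace_sub, Matrix.trace_sub]
    ring
  have hYX : (Yᵀ * X).trace = (Xᵀ * Y).trace := by
    rw [← Matrix.trace_transpose (Yᵀ * X), Matrix.transpose_mul, Matrix.transpose_transpose]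
  have hXX : (Xᵀ * X).trace = ∑ a, ∑ b, (Z a b)^2 := by
    rw [hX]
    have : (O * Z * Uᵀ)ᵀ * (O * Z * Uᵀ) = U * (Zᵀ * (Oᵀ * (O * (Z * Uᵀ)))) := by
      simp only [Matrix.transpose_mul, Matrix.transpose_transpose, Matrix.mul_assoc]
    rw [this, ← Matrix.mul_assoc Oᵀ O, hO, Matrix.one_mul, Matrix.trace_mul_comm]
    simp only [Matrix.mul_assoc]
    rw [hU, Matrix.mul_one, ← aux_sum_mul_entries]
    exact Finset.sum_congr rfl fun a _ => Finset.sum_congr rfl fun b _ => (sq (Z a b)).symm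
  have hYY : (Yᵀ * Y).trace = ∑ a, ∑ b, (Z' a b)^2 := by
    rw [hY]
    have : (O' * Z' * U'ᵀ)ᵀ * (O' * Z' * U'ᵀ) = U' * (Z'ᵀ * (O'ᵀ * (O' * (Z' * U'ᵀ)))) := by
      simp only [Matrix.transpose_mul, Matrix.transpose_transpose, Matrix.mul_assoc]
    rw [this, ← Matrix.mul_assoc O'ᵀ O', hO', Matrix.one_mul, Matrix.trace_mul_comm]
    simp only [Matrix.mul_assoc]
    rw [hU', Matrix.mul_one, ← aux_sum_mul_entries]
    exact Finset.sum_congr rfl fun a _ => Finset.sum_congr rfl fun b _ => (sq (Z' a b)).symm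
  have hXY : (Xᵀ * Y).trace = ∑ a, ∑ b, Z a b * ((Oᵀ * O') * Z' * (Uᵀ * U')ᵀ) a b := by
    rw [hX, hY, aux_sum_mul_entries]
    have e1 : (O * Z * Uᵀ)ᵀ * (O' * Z' * U'ᵀ) = U * (Zᵀ * (Oᵀ * (O' * (Z' * U'ᵀ)))) := by
      simp only [Matrix.transpose_mul, Matrix.transpose_transpose, Matrix.mul_assoc]
    have e2 : Zᵀ * ((Oᵀ * O') * Z' * (Uᵀ * U')ᵀ) = Zᵀ * (Oᵀ * (O' * (Z' * (U'ᵀ * U)))) := by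
      simp only [Matrix.transpose_mul, Matrix.transpose_transpose, Matrix.mul_assoc]
    rw [e1, e2, Matrix.trace_mul_comm]
    simp only [Matrix.mul_assoc]
  rw [h0, hsplit, hYX, hXX, hYY, hXY]
  ring

theorem spectral_function_lipschitz_frobenius
    {M N : ℕ} (L : ℝ) (hL : 0 ≤ L) (g : ℝ → ℝ) (hg0 : g 0 = 0)
    (hgLip : ∀ x y : ℝ, 0 ≤ x → 0 ≤ y → |g x - g y| ≤ L * |x - y|)
    (O O' : Matrix (Fin M) (Fin M) ℝ) (U U' : Matrix (Fin N) (Fin N) ℝ)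
    (D D' : Matrix (Fin M) (Fin N) ℝ)
    (hO : O.transpose * O = 1) (hO' : O'.transpose * O' = 1)
    (hU : U.transpose * U = 1) (hU' : U'.transpose * U' = 1)
    (hD : IsRectDiagNonneg D) (hD' : IsRectDiagNonneg D') :
    ∑ i, ∑ j,
        ((O * rectDiagMap g D * U.transpose
          - O' * rectDiagMap g D' * U'.transpose) i j) ^ 2 ≤
      L ^ 2 * ∑ i, ∑ j,
        ((O * D * U.transpose - O' * D' * U'.transpose) i j) ^ 2 := by
  classical
  -- abbreviations
  set e₁ : Fin (min M N) → Fin M := Fin.castLE (min_le_left M N) with he₁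
  set e₂ : Fin (min M N) → Fin N := Fin.castLE (min_le_right M N) with he₂
  set A : Matrix (Fin M) (Fin M) ℝ := O.transpose * O' with hA
  set B : Matrix (Fin N) (Fin N) ℝ := U.transpose * U' with hB
  -- Lipschitz scalar facts
  have habs : ∀ u : ℝ, 0 ≤ u → |g u| ≤ L * u := by
    intro u hu
    simpa [hg0, abs_of_nonneg hu] using hgLip u 0 hu le_rfl
  have hsq : ∀ u : ℝ, 0 ≤ u → (g u)^2 ≤ L^2 * u^2 := by
    intro u hu
    have h2 := abs_le.mp (habs u hu)
    have h3 : (g u)^2 ≤ (L*u)^2 := sq_le_sq' (by linarith) h2.2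
    calc (g u)^2 ≤ (L*u)^2 := h3
      _ = L^2 * u^2 := mul_pow L u 2
  have hdiff : ∀ u v : ℝ, 0 ≤ u → 0 ≤ v → (g u - g v)^2 ≤ L^2*(u - v)^2 := by
    intro u v hu hv
    have h2 := abs_le.mp (hgLip u v hu hv)
    have h3 : (g u - g v)^2 ≤ (L*|u - v|)^2 := sq_le_sq' (by linarith) h2.2
    calc (g u - g v)^2 ≤ (L*|u - v|)^2 := h3
      _ = L^2 * |u - v|^2 := mul_pow L _ 2
      _ = L^2 * (u - v)^2 := by rw [sq_abs]
  have hplus : ∀ u v : ℝ, 0 ≤ u → 0 ≤ v → (g u + g v)^2 ≤ L^2*(u + v)^2 := by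
    intro u v hu hv
    have h : |g u + g v| ≤ L*(u + v) := by
      refine (abs_add_le _ _).trans ?_
      have h1 := habs u hu
      have h2 := habs v hv
      linarith
    have h2 := abs_le.mp h
    have h3 : (g u + g v)^2 ≤ (L*(u + v))^2 := sq_le_sq' (by linarith) h2.2
    calc (g u + g v)^2 ≤ (L*(u + v))^2 := h3
      _ = L^2 * (u + v)^2 := mul_pow L _ 2
  -- orthogonality facts
  have hO2 : O * O.transpose = 1 := mul_eq_one_comm.mp hO
  have hO'2 : O' * O'.transpose = 1 := mul_eq_one_comm.mp hO'
  have hU2 : U * U.transpose = 1 := mul_eq_one_comm.mp hU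
  have hU'2 : U' * U'.transpose = 1 := mul_eq_one_comm.mp hU'
  have hA1 : A * A.transpose = 1 := by
    rw [hA, Matrix.transpose_mul, Matrix.transpose_transpose]
    have e : O.transpose * O' * (O'.transpose * O)
        = O.transpose * ((O' * O'.transpose) * O) := by
      simp only [Matrix.mul_assoc]
    rw [e, hO'2, Matrix.one_mul, hO]
  have hA2 : A.transpose * A = 1 := by
    rw [hA, Matrix.transpose_mul, Matrix.transpose_transpose]
    have e : O'.transpose * O * (O.transpose * O')
        = O'.transpose * ((O * O.transpose) * O') := by
      simp only [Matrix.mul_assoc]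
    rw [e, hO2, Matrix.one_mul, hO']
  have hB1 : B * B.transpose = 1 := by
    rw [hB, Matrix.transpose_mul, Matrix.transpose_transpose]
    have e : U.transpose * U' * (U'.transpose * U)
        = U.transpose * ((U' * U'.transpose) * U) := by
      simp only [Matrix.mul_assoc]
    rw [e, hU'2, Matrix.one_mul, hU]
  have hB2 : B.transpose * B = 1 := by
    rw [hB, Matrix.transpose_mul, Matrix.transpose_transpose]
    have e : U'.transpose * U * (U.transpose * U')
        = U'.transpose * ((U * U.transpose) * U') := by
      simp only [Matrix.mul_assoc]
    rw [e, hU2, Matrix.one_mul, hU']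
  -- row/column partial sums
  have hra : ∀ s, ∑ t, (A (e₁ s) (e₁ t))^2 ≤ 1 := by
    intro s
    refine aux_partial_sq_le (fun j => A (e₁ s) j) ?_ e₁ (Fin.castLE_injective _)
    have h1 : (A * A.transpose) (e₁ s) (e₁ s)
        = (1 : Matrix (Fin M) (Fin M) ℝ) (e₁ s) (e₁ s) := by rw [hA1]
    simpa [Matrix.mul_apply, Matrix.transpose_apply, Matrix.one_apply, pow_two] using h1
  have hca : ∀ t, ∑ s, (A (e₁ s) (e₁ t))^2 ≤ 1 := by
    intro t
    refine aux_partial_sq_le (fun i => A i (e₁ t)) ?_ e₁ (Fin.castLE_injective _)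
    have h1 : (A.transpose * A) (e₁ t) (e₁ t)
        = (1 : Matrix (Fin M) (Fin M) ℝ) (e₁ t) (e₁ t) := by rw [hA2]
    simpa [Matrix.mul_apply, Matrix.transpose_apply, Matrix.one_apply, pow_two,
      mul_comm] using h1
  have hrb : ∀ s, ∑ t, (B (e₂ s) (e₂ t))^2 ≤ 1 := by
    intro s
    refine aux_partial_sq_le (fun j => B (e₂ s) j) ?_ e₂ (Fin.castLE_injective _)
    have h1 : (B * B.transpose) (e₂ s) (e₂ s)
        = (1 : Matrix (Fin N) (Fin N) ℝ) (e₂ s) (e₂ s) := by rw [hB1]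
    simpa [Matrix.mul_apply, Matrix.transpose_apply, Matrix.one_apply, pow_two] using h1
  have hcb : ∀ t, ∑ s, (B (e₂ s) (e₂ t))^2 ≤ 1 := by
    intro t
    refine aux_partial_sq_le (fun i => B i (e₂ t)) ?_ e₂ (Fin.castLE_injective _)
    have h1 : (B.transpose * B) (e₂ t) (e₂ t)
        = (1 : Matrix (Fin N) (Fin N) ℝ) (e₂ t) (e₂ t) := by rw [hB2]
    simpa [Matrix.mul_apply, Matrix.transpose_apply, Matrix.one_apply, pow_two,
      mul_comm] using h1
  -- Frobenius expansions
  rw [aux_frob_expand O O' U U' (rectDiagMap g D) (rectDiagMap g D') hO hO' hU hU',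
    aux_frob_expand O O' U U' D D' hO hO' hU hU']
  -- collapse sums
  have cZ : ∑ a, ∑ b, (rectDiagMap g D a b)^2 = ∑ s, (g (D (e₁ s) (e₂ s)))^2 := by
    rw [aux_diag_collapse _ (fun a b h => by simp [rectDiagMap, h])]
    exact Finset.sum_congr rfl fun t _ => by simp [rectDiagMap, e₁, e₂]
  have cZ' : ∑ a, ∑ b, (rectDiagMap g D' a b)^2 = ∑ t, (g (D' (e₁ t) (e₂ t)))^2 := by
    rw [aux_diag_collapse _ (fun a b h => by simp [rectDiagMap, h])]
    exact Finset.sum_congr rfl fun t _ => by simp [rectDiagMap, e₁, e₂]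
  have cD : ∑ a, ∑ b, (D a b)^2 = ∑ s, (D (e₁ s) (e₂ s))^2 := by
    rw [aux_diag_collapse _ (fun a b h => by rw [hD.1 a b h]; ring)]
  have cD' : ∑ a, ∑ b, (D' a b)^2 = ∑ t, (D' (e₁ t) (e₂ t))^2 := by
    rw [aux_diag_collapse _ (fun a b h => by rw [hD'.1 a b h]; ring)]
  have hWg : ∀ (i : Fin M) (j : Fin N),
      (A * rectDiagMap g D' * B.transpose) i j
        = ∑ t, A i (e₁ t) * g (D' (e₁ t) (e₂ t)) * B j (e₂ t) := by
    intro i j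
    have e : (A * rectDiagMap g D' * B.transpose) i j
        = ∑ a', ∑ b', A i a' * rectDiagMap g D' a' b' * B j b' := by
      simp only [Matrix.mul_apply, Matrix.transpose_apply, Finset.sum_mul]
      exact Finset.sum_comm
    rw [e, aux_diag_collapse _ (fun a b h => by simp [rectDiagMap, h])]
    exact Finset.sum_congr rfl fun t _ => by simp [rectDiagMap, e₁, e₂]
  have hWx : ∀ (i : Fin M) (j : Fin N),
      (A * D' * B.transpose) i j
        = ∑ t, A i (e₁ t) * D' (e₁ t) (e₂ t) * B j (e₂ t) := by
    intro i j
    have e : (A * D' * B.transpose) i j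
        = ∑ a', ∑ b', A i a' * D' a' b' * B j b' := by
      simp only [Matrix.mul_apply, Matrix.transpose_apply, Finset.sum_mul]
      exact Finset.sum_comm
    rw [e, aux_diag_collapse _ (fun a b h => by rw [hD'.1 a b h, mul_zero, zero_mul])]
  have cCrossG : ∑ a, ∑ b,
        rectDiagMap g D a b * ((O.transpose * O') * rectDiagMap g D'
          * (U.transpose * U').transpose) a b
      = ∑ s, ∑ t, g (D (e₁ s) (e₂ s))
          * (A (e₁ s) (e₁ t) * B (e₂ s) (e₂ t)) * g (D' (e₁ t) (e₂ t)) := by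
    rw [show (O.transpose * O') = A from rfl, show (U.transpose * U') = B from rfl]
    rw [aux_diag_collapse _ (fun a b h => by simp [rectDiagMap, h])]
    refine Finset.sum_congr rfl fun s _ => ?_
    have hz : rectDiagMap g D (e₁ s) (e₂ s) = g (D (e₁ s) (e₂ s)) := by
      simp [rectDiagMap, e₁, e₂]
    rw [hz, hWg, Finset.mul_sum]
    exact Finset.sum_congr rfl fun t _ => by ring
  have cCrossX : ∑ a, ∑ b,
        D a b * ((O.transpose * O') * D' * (U.transpose * U').transpose) a b
      = ∑ s, ∑ t, D (e₁ s) (e₂ s)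
          * (A (e₁ s) (e₁ t) * B (e₂ s) (e₂ t)) * D' (e₁ t) (e₂ t) := by
    rw [show (O.transpose * O') = A from rfl, show (U.transpose * U') = B from rfl]
    rw [aux_diag_collapse _ (fun a b h => by rw [hD.1 a b h, zero_mul])]
    refine Finset.sum_congr rfl fun s _ => ?_
    rw [hWx, Finset.mul_sum]
    exact Finset.sum_congr rfl fun t _ => by ring
  rw [cZ, cZ', cD, cD', cCrossG, cCrossX]
  exact aux_core_ineq L
    (fun s => D (e₁ s) (e₂ s)) (fun t => D' (e₁ t) (e₂ t))
    (fun s => g (D (e₁ s) (e₂ s))) (fun t => g (D' (e₁ t) (e₂ t)))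
    (fun s t => A (e₁ s) (e₁ t)) (fun s t => B (e₂ s) (e₂ t))
    (fun s => hsq _ (hD.2 _ _)) (fun t => hsq _ (hD'.2 _ _))
    (fun s t => hdiff _ _ (hD.2 _ _) (hD'.2 _ _))
    (fun s t => hplus _ _ (hD.2 _ _) (hD'.2 _ _))
    hra hrb hca hcb
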